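/- arXiv:2303.13146 — 5 statements merged into one kernel-verified Lean document; each statement's English description precedes it below -/
import Mathlib

section
/- Let C be a nonempty closed subset of a Euclidean space X and let D be an affine subspace of X. If for every d in D the set of projections of d onto C has nonempty intersection with D, then for every x in X, the projection of x onto C ∩ D equals P_C(P_D(x)) ∩ D, where P_D(x) is the (unique) projection of x onto D. -/
open Filter Metric
open scoped RealInnerProductSpace Pointwise

noncomputable section

variable {X : Type*} [NormedAddCommGroup X] [InnerProductSpace ℝ X]

/-- Set-valued metric projection onto `C`. -/
def proj (C : Set X) (x : X) : Set X :=
  {p | p ∈ C ∧ ‖x - p‖ = Metric.infDist x C}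

/-- Limiting normal cone to `C` at `x` (empty when `x ∉ C`). -/
def limNormalCone (C : Set X) (x : X) : Set X :=
  {u | x ∈ C ∧ ∃ (τ : ℕ → ℝ) (xs zs : ℕ → X),
    (∀ k, 0 ≤ τ k) ∧ (∀ k, zs k ∈ proj C (xs k)) ∧
    Tendsto xs atTop (nhds x) ∧
    Tendsto (fun k => τ k • (zs k - xs k)) atTop (nhds u)}

/-- Super-regularity of a set at a point. -/
def SuperRegular (C : Set X) (xb : X) : Prop :=
  ∀ ε > 0, ∃ δ > 0, ∀ y ∈ C ∩ Metric.closedBall xb δ, ∀ z ∈ C ∩ Metric.closedBall xb δ,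
    ∀ u ∈ limNormalCone C z, ⟪u, y - z⟫ ≤ ε * ‖u‖ * ‖y - z‖

/-- Diagonal embedding of `X` into the product `PiLp 2 (fun _ : Fin m => X)`. -/
def diagMap (m : ℕ) (u : X) : PiLp 2 (fun _ : Fin m => X) :=
  (WithLp.equiv 2 _).symm (fun _ => u)

/-- The diagonal subspace of the product space. -/
def diagSub (m : ℕ) (X : Type*) [NormedAddCommGroup X] [InnerProductSpace ℝ X] :
    Submodule ℝ (PiLp 2 (fun _ : Fin m => X)) where
  carrier := {x | ∀ i j, x i = x j}
  add_mem' := by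
    intro a b ha hb i j
    show a i + b i = a j + b j
    rw [ha i j, hb i j]
  zero_mem' := by intro i j; rfl
  smul_mem' := by
    intro c a ha i j
    show c • a i = c • a j
    rw [ha i j]
theorem stmt0 [FiniteDimensional ℝ X]
    (C : Set X) (hCne : C.Nonempty) (hCcl : IsClosed C)
    (D : AffineSubspace ℝ X) [Nonempty D] [D.direction.HasOrthogonalProjection]
    (h : ∀ d ∈ (D : Set X), (proj C d ∩ (D : Set X)).Nonempty) :
    ∀ x : X, proj (C ∩ (D : Set X)) x
      = proj C ((EuclideanGeometry.orthogonalProjection D x : X)) ∩ (D : Set X) := by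
  intro x
  set p : X := (EuclideanGeometry.orthogonalProjection D x : X) with hpdef
  have hpD : p ∈ (D : Set X) := (EuclideanGeometry.orthogonalProjection D x).2
  obtain ⟨c₀, ⟨hc₀C, hc₀n⟩, hc₀D⟩ := h p hpD
  have hCDne : (C ∩ (D : Set X)).Nonempty := ⟨c₀, hc₀C, hc₀D⟩
  set m : ℝ := Metric.infDist p (C ∩ (D : Set X)) with hm
  have hm0 : 0 ≤ m := Metric.infDist_nonneg
  have hinf : m = Metric.infDist p C := by
    apply le_antisymm
    · calc m ≤ dist p c₀ := Metric.infDist_le_dist_of_mem ⟨hc₀C, hc₀D⟩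
        _ = Metric.infDist p C := by rw [dist_eq_norm]; exact hc₀n
    · exact Metric.infDist_le_infDist_of_subset Set.inter_subset_left hCDne
  have hc₀m : ‖p - c₀‖ = m := by rw [hinf]; exact hc₀n
  have hperp : ∀ c ∈ (D : Set X), ‖x - c‖ ^ 2 = ‖x - p‖ ^ 2 + ‖p - c‖ ^ 2 := by
    intro c hc
    have h1 : x - p ∈ D.directionᗮ := by
      simpa using EuclideanGeometry.vsub_orthogonalProjection_mem_direction_orthogonal D x
    have h2 : p - c ∈ D.direction := AffineSubspace.vsub_mem_direction hpD hc
    have hin : ⟪x - p, p - c⟫ = 0 := by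
      rw [real_inner_comm]; exact h1 (p - c) h2
    have hxc : x - c = (x - p) + (p - c) := by abel
    rw [hxc, norm_add_sq_real, hin]; ring
  -- compute infDist x (C ∩ D)
  obtain ⟨z₀, hz₀mem, hz₀d⟩ := IsClosed.exists_infDist_eq_dist
    (hCcl.inter (D.closed_of_finiteDimensional)) hCDne x
  have hz₀n : Metric.infDist x (C ∩ (D : Set X)) = ‖x - z₀‖ := by
    rw [hz₀d, dist_eq_norm]
  have hz₀D : z₀ ∈ (D : Set X) := hz₀mem.2
  have hle1 : ‖x - z₀‖ ≤ ‖x - c₀‖ := by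
    rw [← hz₀n, ← dist_eq_norm]; exact Metric.infDist_le_dist_of_mem ⟨hc₀C, hc₀D⟩
  have hge : m ≤ ‖p - z₀‖ := by
    rw [← dist_eq_norm]; exact Metric.infDist_le_dist_of_mem hz₀mem
  have hpz₀ : ‖p - z₀‖ = m := by
    have e1 := hperp z₀ hz₀D
    have e2 := hperp c₀ hc₀D
    nlinarith [norm_nonneg (x - z₀), norm_nonneg (x - c₀), norm_nonneg (p - z₀), hc₀m]
  have hinfx : Metric.infDist x (C ∩ (D : Set X)) ^ 2 = ‖x - p‖ ^ 2 + m ^ 2 := by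
    rw [hz₀n, hperp z₀ hz₀D, hpz₀]
  have hinfx0 : 0 ≤ Metric.infDist x (C ∩ (D : Set X)) := Metric.infDist_nonneg
  ext z
  constructor
  · rintro ⟨⟨hzC, hzD⟩, hzn⟩
    have e1 := hperp z hzD
    have hpz : ‖p - z‖ = m := by
      nlinarith [norm_nonneg (p - z), norm_nonneg (x - z)]
    exact ⟨⟨hzC, by rw [hpz, hinf]⟩, hzD⟩
  · rintro ⟨⟨hzC, hzn⟩, hzD⟩
    have hpz : ‖p - z‖ = m := by rw [hinf]; exact hzn
    have e1 := hperp z hzD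
    refine ⟨⟨hzC, hzD⟩, ?_⟩
    nlinarith [norm_nonneg (x - z)]
end
end

section
/- Let C_r be a nonempty closed subset of a Euclidean space X, let K = {(x,…,x) ∈ X^{r-1} : x ∈ C_r}, and let D_{r-1} be the diagonal subspace of X^{r-1}. Then for every point x = (x,…,x) ∈ K, the limiting normal cone satisfies N_K(x) = j(N_{C_r}(x)) + D_{r-1}^⊥, where j : X → X^{r-1} is the diagonal embedding j(u) = (u,…,u). -/
open Filter Metric Topology
open scoped RealInnerProductSpace Pointwise

set_option linter.unusedSectionVars false

noncomputable section

variable {X : Type*} [NormedAddCommGroup X] [InnerProductSpace ℝ X]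

/-! ### Auxiliary material -/

/-- The mean of the coordinates of a point of the product space. -/
def meanMap (m : ℕ) (y : PiLp 2 (fun _ : Fin m => X)) : X := (m : ℝ)⁻¹ • ∑ i, y i

variable {m : ℕ}

lemma diagMap_apply (u : X) (i : Fin m) : diagMap m u i = u := rfl

lemma diagMap_sub (a b : X) : diagMap m (a - b) = diagMap m a - diagMap m b := rfl

lemma diagMap_add (a b : X) : diagMap m (a + b) = diagMap m a + diagMap m b := rfl

lemma diagMap_smul (c : ℝ) (a : X) : diagMap m (c • a) = c • diagMap m a := rfl

lemma diagMap_inj (hm : m ≠ 0) : Function.Injective (diagMap (X := X) m) := by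
  intro a b h
  have := congrArg (fun y : PiLp 2 (fun _ : Fin m => X) => y ⟨0, Nat.pos_of_ne_zero hm⟩) h
  exact this

lemma meanMap_diag (hm : m ≠ 0) (u : X) : meanMap m (diagMap m u) = u := by
  simp only [meanMap, diagMap_apply, Finset.sum_const, Finset.card_univ, Fintype.card_fin]
  rw [← Nat.cast_smul_eq_nsmul ℝ, smul_smul, inv_mul_cancel₀ (by exact_mod_cast hm), one_smul]

lemma meanMap_sub (a b : PiLp 2 (fun _ : Fin m => X)) :
    meanMap m (a - b) = meanMap m a - meanMap m b := by
  simp only [meanMap]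
  rw [← smul_sub, ← Finset.sum_sub_distrib]
  rfl

lemma meanMap_smul (c : ℝ) (a : PiLp 2 (fun _ : Fin m => X)) :
    meanMap m (c • a) = c • meanMap m a := by
  simp only [meanMap]
  rw [show (∑ i, (c • a) i) = ∑ i, c • a i from rfl, ← Finset.smul_sum, smul_comm]

lemma continuous_meanMap : Continuous (meanMap (X := X) m) := by
  apply Continuous.const_smul
  exact continuous_finset_sum _ fun i _ =>
    (continuous_apply i).comp (PiLp.continuousLinearEquiv 2 ℝ _).continuous

lemma continuous_diagMap : Continuous (diagMap (X := X) m) := by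
  exact (PiLp.continuousLinearEquiv 2 ℝ _).symm.continuous.comp
    (continuous_pi fun _ => continuous_id)

lemma sum_sub_mean (hm : m ≠ 0) (y : PiLp 2 (fun _ : Fin m => X)) :
    ∑ i, (y i - meanMap m y) = 0 := by
  rw [Finset.sum_sub_distrib, Finset.sum_const, Finset.card_univ, Fintype.card_fin,
    ← Nat.cast_smul_eq_nsmul ℝ, meanMap, smul_smul,
    mul_inv_cancel₀ (by exact_mod_cast hm), one_smul, sub_self]

lemma le_infDist' {α : Type*} [PseudoMetricSpace α] {s : Set α} {x : α} {b : ℝ}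
    (hs : s.Nonempty) (h : ∀ y ∈ s, b ≤ dist x y) : b ≤ infDist x s := by
  by_contra hlt
  push_neg at hlt
  obtain ⟨y, hy, hd⟩ := (infDist_lt_iff hs).1 hlt
  exact absurd (h y hy) (not_le.2 hd)

lemma mem_diagSub_orth_iff (hm : m ≠ 0) (v : PiLp 2 (fun _ : Fin m => X)) :
    v ∈ (diagSub m X)ᗮ ↔ ∑ i, v i = 0 := by
  constructor
  · intro hv
    have hd : diagMap m (∑ i, v i) ∈ diagSub m X := fun i j => rfl
    have := (Submodule.mem_orthogonal _ v).1 hv _ hd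
    have h2 : ∑ i, ⟪(∑ j, v j), v i⟫ = (0 : ℝ) := by
      simpa [PiLp.inner_apply, diagMap] using this
    rw [← inner_sum] at h2
    exact inner_self_eq_zero.1 h2
  · intro hsum
    rw [Submodule.mem_orthogonal]
    intro w hw
    have i0 : Fin m := ⟨0, Nat.pos_of_ne_zero hm⟩
    have hwc : ∀ i, w i = w i0 := fun i => hw i i0
    calc ⟪w, v⟫ = ∑ i, ⟪w i, v i⟫ := PiLp.inner_apply w v
    _ = ∑ i, ⟪w i0, v i⟫ := by
        refine Finset.sum_congr rfl fun i _ => by rw [hwc i]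
    _ = ⟪w i0, ∑ i, v i⟫ := (inner_sum _ _ _).symm
    _ = 0 := by rw [hsum, inner_zero_right]

lemma norm_sub_diag_sq (hm : m ≠ 0) (y : PiLp 2 (fun _ : Fin m => X)) (p : X) :
    ‖y - diagMap m p‖ ^ 2
      = (∑ i, ‖y i - meanMap m y‖ ^ 2) + m * ‖meanMap m y - p‖ ^ 2 := by
  have h1 : ∀ i : Fin m, (y - diagMap m p) i = (y i - meanMap m y) + (meanMap m y - p) := by
    intro i
    show y i - p = _
    abel
  rw [PiLp.norm_sq_eq_of_L2]
  calc ∑ i, ‖(y - diagMap m p) i‖ ^ 2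
      = ∑ i, (‖y i - meanMap m y‖ ^ 2 + 2 * ⟪y i - meanMap m y, meanMap m y - p⟫
          + ‖meanMap m y - p‖ ^ 2) := by
        refine Finset.sum_congr rfl fun i _ => by rw [h1 i, norm_add_sq_real]
    _ = (∑ i, ‖y i - meanMap m y‖ ^ 2)
          + 2 * ⟪∑ i, (y i - meanMap m y), meanMap m y - p⟫
          + m * ‖meanMap m y - p‖ ^ 2 := by
        rw [Finset.sum_add_distrib, Finset.sum_add_distrib, ← Finset.mul_sum, ← sum_inner]
        simp [Finset.sum_const, Finset.card_univ, mul_comm]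
    _ = _ := by rw [sum_sub_mean hm y, inner_zero_left]; ring

lemma infDist_diag_image (hm : m ≠ 0) {C : Set X} (hne : C.Nonempty)
    (y : PiLp 2 (fun _ : Fin m => X)) :
    infDist y (diagMap m '' C)
      = Real.sqrt ((∑ i, ‖y i - meanMap m y‖ ^ 2) + m * (infDist (meanMap m y) C) ^ 2) := by
  set c := ∑ i, ‖y i - meanMap m y‖ ^ 2 with hc
  have hc0 : 0 ≤ c := Finset.sum_nonneg fun i _ => sq_nonneg _
  set d := infDist (meanMap m y) C with hd
  have hd0 : 0 ≤ d := infDist_nonneg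
  have key : ∀ p : X, dist y (diagMap m p) = Real.sqrt (c + m * ‖meanMap m y - p‖ ^ 2) := by
    intro p
    rw [dist_eq_norm, ← Real.sqrt_sq (norm_nonneg (y - diagMap m p)), norm_sub_diag_sq hm]
  refine le_antisymm ?_ ?_
  · have hev : ∀ᶠ t in 𝓝[>] d, infDist y (diagMap m '' C) ≤ Real.sqrt (c + m * t ^ 2) := by
      filter_upwards [self_mem_nhdsWithin] with t ht
      obtain ⟨p, hp, hpd⟩ := (infDist_lt_iff hne).1 (by exact ht : d < t)
      refine le_trans (infDist_le_dist_of_mem ⟨p, hp, rfl⟩) ?_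
      rw [key p]
      apply Real.sqrt_le_sqrt
      have h1 : ‖meanMap m y - p‖ ≤ t := by
        rw [← dist_eq_norm]; exact le_of_lt hpd
      have h2 : ‖meanMap m y - p‖ ^ 2 ≤ t ^ 2 := by
        nlinarith [norm_nonneg (meanMap m y - p)]
      have h3 := mul_le_mul_of_nonneg_left h2 (Nat.cast_nonneg (α := ℝ) m)
      linarith
    have htend : Tendsto (fun t => Real.sqrt (c + m * t ^ 2)) (𝓝[>] d)
        (𝓝 (Real.sqrt (c + m * d ^ 2))) := by
      apply Tendsto.mono_left _ nhdsWithin_le_nhds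
      exact (Real.continuous_sqrt.comp (by continuity)).tendsto d
    exact ge_of_tendsto htend hev
  · refine le_infDist' (hne.image _) ?_
    rintro z ⟨p, hp, rfl⟩
    rw [key p]
    apply Real.sqrt_le_sqrt
    have h1 : d ≤ ‖meanMap m y - p‖ := by
      rw [← dist_eq_norm]; exact infDist_le_dist_of_mem hp
    have h2 : d ^ 2 ≤ ‖meanMap m y - p‖ ^ 2 := by nlinarith
    have h3 := mul_le_mul_of_nonneg_left h2 (Nat.cast_nonneg (α := ℝ) m)
    linarith

lemma mem_proj_diag_iff (hm : m ≠ 0) {C : Set X} (hne : C.Nonempty)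
    (y : PiLp 2 (fun _ : Fin m => X)) (p : X) :
    diagMap m p ∈ proj (diagMap m '' C) y ↔ p ∈ proj C (meanMap m y) := by
  set c := ∑ i, ‖y i - meanMap m y‖ ^ 2 with hc
  have hc0 : 0 ≤ c := Finset.sum_nonneg fun i _ => sq_nonneg _
  set d := infDist (meanMap m y) C with hd
  have hd0 : 0 ≤ d := infDist_nonneg
  have hmem : diagMap m p ∈ diagMap m '' C ↔ p ∈ C :=
    ⟨fun ⟨a, ha, hap⟩ => (diagMap_inj hm hap) ▸ ha, fun h => ⟨p, h, rfl⟩⟩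
  have hsq : ‖y - diagMap m p‖ = infDist y (diagMap m '' C)
      ↔ ‖meanMap m y - p‖ = d := by
    rw [infDist_diag_image hm hne y, ← hc, ← hd]
    constructor
    · intro h
      have h2 : ‖y - diagMap m p‖ ^ 2 = c + m * d ^ 2 := by
        rw [h, Real.sq_sqrt (by positivity)]
      rw [norm_sub_diag_sq hm, ← hc] at h2
      have hm' : (0 : ℝ) ≠ m := by
        exact_mod_cast (Nat.pos_of_ne_zero hm).ne
      have h3 : ‖meanMap m y - p‖ ^ 2 = d ^ 2 :=
        mul_left_cancel₀ hm'.symm (by linarith)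
      rw [← Real.sqrt_sq (norm_nonneg _), ← Real.sqrt_sq hd0, h3]
    · intro h
      rw [show ‖y - diagMap m p‖ = Real.sqrt (‖y - diagMap m p‖ ^ 2) from
        (Real.sqrt_sq (norm_nonneg _)).symm, norm_sub_diag_sq hm, ← hc, h]
  constructor
  · rintro ⟨h1, h2⟩
    exact ⟨hmem.1 h1, hsq.1 h2⟩
  · rintro ⟨h1, h2⟩
    exact ⟨hmem.2 h1, hsq.2 h2⟩

lemma proj_segment {C : Set X} {w p : X} (hp : p ∈ proj C w) {t : ℝ}
    (ht0 : 0 ≤ t) (ht1 : t ≤ 1) : p ∈ proj C (p + t • (w - p)) := by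
  obtain ⟨hpC, hpd⟩ := hp
  refine ⟨hpC, ?_⟩
  have hw' : ‖p + t • (w - p) - p‖ = t * ‖w - p‖ := by
    rw [add_sub_cancel_left, norm_smul, Real.norm_of_nonneg ht0]
  rw [hw']
  refine le_antisymm ?_ ?_
  · refine le_infDist' ⟨p, hpC⟩ ?_
    intro c' hc'
    have h1 : ‖w - p‖ ≤ ‖w - c'‖ := by
      rw [hpd]; rw [show ‖w - c'‖ = dist w c' from (dist_eq_norm _ _).symm]
      exact infDist_le_dist_of_mem hc'
    have h2 : ‖w - (p + t • (w - p))‖ = (1 - t) * ‖w - p‖ := by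
      rw [show w - (p + t • (w - p)) = (1 - t) • (w - p) by
        rw [sub_smul, one_smul]; abel, norm_smul, Real.norm_of_nonneg (by linarith)]
    have h3 : ‖w - c'‖ ≤ ‖w - (p + t • (w - p))‖ + ‖p + t • (w - p) - c'‖ := by
      have := norm_sub_le_norm_sub_add_norm_sub w (p + t • (w - p)) c'
      exact this
    rw [dist_eq_norm]
    rw [h2] at h3
    nlinarith [norm_nonneg (w - p)]
  · have := infDist_le_dist_of_mem (x := p + t • (w - p)) hpC
    rwa [dist_eq_norm, hw'] at this

theorem stmt5 (r : ℕ) (hr : 2 ≤ r)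
    (Cr : Set X) (hne : Cr.Nonempty) (hcl : IsClosed Cr)
    (x : X) (hx : x ∈ Cr) :
    limNormalCone {y : PiLp 2 (fun _ : Fin (r - 1) => X) | ∃ a ∈ Cr, ∀ i, y i = a}
        (diagMap (r - 1) x)
      = diagMap (r - 1) '' limNormalCone Cr x
          + (((diagSub (r - 1) X)ᗮ : Submodule ℝ _) : Set _) := by
  set m := r - 1 with hmdef
  have hm : m ≠ 0 := by omega
  have hK : {y : PiLp 2 (fun _ : Fin m => X) | ∃ a ∈ Cr, ∀ i, y i = a}
      = diagMap m '' Cr := by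
    ext y
    constructor
    · rintro ⟨a, ha, h⟩
      exact ⟨a, ha, PiLp.ext fun i => (h i).symm⟩
    · rintro ⟨a, ha, rfl⟩
      exact ⟨a, ha, fun i => rfl⟩
  rw [hK]
  ext u
  constructor
  · rintro ⟨hxK, τ, ys, zs, hτ, hproj, hys, hlim⟩
    have hzdiag : ∀ k, ∃ p, p ∈ proj Cr (meanMap m (ys k)) ∧ zs k = diagMap m p := by
      intro k
      obtain ⟨⟨p, hpC, hp⟩, hdist⟩ := hproj k
      refine ⟨p, (mem_proj_diag_iff hm hne (ys k) p).1 ?_, hp.symm⟩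
      rw [hp]
      exact ⟨⟨p, hpC, hp⟩, hdist⟩
    choose ps hps hzs using hzdiag
    have hmean_ys : Tendsto (fun k => meanMap m (ys k)) atTop (𝓝 x) := by
      have := (continuous_meanMap.tendsto (diagMap m x)).comp hys
      rwa [meanMap_diag hm] at this
    have hAu : Tendsto (fun k => τ k • (ps k - meanMap m (ys k))) atTop
        (𝓝 (meanMap m u)) := by
      have heq : (fun k => τ k • (ps k - meanMap m (ys k)))
          = fun k => meanMap m (τ k • (zs k - ys k)) := by
        funext k
        rw [meanMap_smul, meanMap_sub, hzs k, meanMap_diag hm]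
      rw [heq]
      exact (continuous_meanMap.tendsto u).comp hlim
    have hv : meanMap m u ∈ limNormalCone Cr x :=
      ⟨hx, τ, fun k => meanMap m (ys k), ps, hτ, hps, hmean_ys, hAu⟩
    have hq : u - diagMap m (meanMap m u) ∈ (diagSub m X)ᗮ := by
      rw [mem_diagSub_orth_iff hm]
      have h0 : ∀ i, (u - diagMap m (meanMap m u)) i = u i - meanMap m u := fun i => rfl
      simp_rw [h0]
      exact sum_sub_mean hm u
    have hdecomp : u = diagMap m (meanMap m u) + (u - diagMap m (meanMap m u)) := by abel
    rw [hdecomp]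
    exact Set.add_mem_add ⟨meanMap m u, hv, rfl⟩ hq
  · intro hu
    rw [Set.mem_add] at hu
    obtain ⟨a, ha, q, hq, hau⟩ := hu
    obtain ⟨v, hv, rfl⟩ := ha
    obtain ⟨hxC, τ, ws, ps, hτ, hps, hws, hlim⟩ := hv
    have hqsum : ∑ i, q i = 0 := (mem_diagSub_orth_iff hm q).1 hq
    have hqmean : meanMap m q = 0 := by rw [meanMap, hqsum, smul_zero]
    set τ' : ℕ → ℝ := fun k => τ k + (k + 1) with hτ'
    have hτ'pos : ∀ k, 0 < τ' k := fun k => by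
      have h1 := hτ k
      have h2 : (0 : ℝ) < (k : ℝ) + 1 := by positivity
      simp only [hτ']
      linarith
    set t : ℕ → ℝ := fun k => τ k / τ' k with htdef
    have ht0 : ∀ k, 0 ≤ t k := fun k => div_nonneg (hτ k) (hτ'pos k).le
    have ht1 : ∀ k, t k ≤ 1 := fun k => by
      rw [htdef]
      rw [div_le_one (hτ'pos k)]
      have : (0 : ℝ) ≤ (k : ℝ) + 1 := by positivity
      simp only [hτ']
      linarith
    set w' : ℕ → X := fun k => ps k + t k • (ws k - ps k) with hw'def
    set ys : ℕ → PiLp 2 (fun _ : Fin m => X) :=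
      fun k => diagMap m (w' k) - (τ' k)⁻¹ • q with hysdef
    set zs : ℕ → PiLp 2 (fun _ : Fin m => X) := fun k => diagMap m (ps k) with hzsdef
    have hmean : ∀ k, meanMap m (ys k) = w' k := by
      intro k
      rw [hysdef]
      rw [meanMap_sub, meanMap_smul, hqmean, smul_zero, sub_zero, meanMap_diag hm]
    have hproj : ∀ k, zs k ∈ proj (diagMap m '' Cr) (ys k) := by
      intro k
      rw [hzsdef, mem_proj_diag_iff hm hne, hmean k]
      exact proj_segment (hps k) (ht0 k) (ht1 k)
    have hdiff : Tendsto (fun k => ws k - ps k) atTop (𝓝 0) := by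
      rw [tendsto_zero_iff_norm_tendsto_zero]
      have h1 : ∀ k, ‖ws k - ps k‖ = infDist (ws k) Cr := fun k => (hps k).2
      simp_rw [h1]
      have := ((continuous_infDist_pt Cr).tendsto x).comp hws
      rwa [infDist_zero_of_mem hx] at this
    have hnorm : Tendsto (fun k => ‖ws k - ps k‖) atTop (𝓝 0) :=
      tendsto_zero_iff_norm_tendsto_zero.1 hdiff
    have hpsx : Tendsto ps atTop (𝓝 x) := by
      have heq : ps = fun k => ws k - (ws k - ps k) := by funext k; abel
      rw [heq]
      simpa using hws.sub hdiff
    have htw : Tendsto (fun k => t k • (ws k - ps k)) atTop (𝓝 0) := by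
      apply squeeze_zero_norm (fun k => ?_) hnorm
      rw [norm_smul, Real.norm_of_nonneg (ht0 k)]
      exact mul_le_of_le_one_left (norm_nonneg _) (ht1 k)
    have hw'x : Tendsto w' atTop (𝓝 x) := by
      have := hpsx.add htw
      simpa using this
    have hinvq : Tendsto (fun k => (τ' k)⁻¹ • q) atTop (𝓝 0) := by
      have h0 : Tendsto (fun k : ℕ => ((k : ℝ) + 1)⁻¹ * ‖q‖) atTop (𝓝 0) := by
        have := tendsto_one_div_add_atTop_nhds_zero_nat.mul_const ‖q‖
        simpa [one_div] using this
      apply squeeze_zero_norm (fun k => ?_) h0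
      rw [norm_smul, Real.norm_of_nonneg (inv_nonneg.2 (hτ'pos k).le)]
      have hle : (τ' k)⁻¹ ≤ ((k : ℝ) + 1)⁻¹ := by
        apply inv_anti₀ (by positivity)
        have := hτ k
        simp only [hτ']
        linarith
      exact mul_le_mul_of_nonneg_right hle (norm_nonneg q)
    have hysx : Tendsto ys atTop (𝓝 (diagMap m x)) := by
      have h1 : Tendsto (fun k => diagMap m (w' k)) atTop (𝓝 (diagMap m x)) :=
        (continuous_diagMap.tendsto x).comp hw'x
      have h2 := h1.sub hinvq
      rw [sub_zero] at h2
      exact h2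
    have hkey : ∀ k, τ' k • (zs k - ys k) = diagMap m (τ k • (ps k - ws k)) + q := by
      intro k
      have hτ'ne : τ' k ≠ 0 := (hτ'pos k).ne'
      have h1 : ps k - w' k = t k • (ps k - ws k) := by
        rw [hw'def]
        module
      have h2 : τ' k • (t k • (ps k - ws k)) = τ k • (ps k - ws k) := by
        rw [smul_smul, htdef, mul_comm, div_mul_cancel₀ _ hτ'ne]
      have h3 : zs k - ys k = diagMap m (ps k - w' k) + (τ' k)⁻¹ • q := by
        rw [hzsdef, hysdef, diagMap_sub]
        exact (sub_add _ _ _).symm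
      rw [h3, smul_add, smul_inv_smul₀ hτ'ne, ← diagMap_smul, h1, h2]
    have hlim' : Tendsto (fun k => τ' k • (zs k - ys k)) atTop
        (𝓝 (diagMap m v + q)) := by
      simp_rw [hkey]
      exact ((continuous_diagMap.tendsto v).comp hlim).add tendsto_const_nhds
    rw [← hau]
    exact ⟨⟨x, hx, rfl⟩, τ', ys, zs, fun k => (hτ'pos k).le, hproj, hysx, hlim'⟩
end
end

section
/- Let C₁,…,C_{r-1} ⊆ X be sets with Cᵢ super-regular at x̄ᵢ ∈ Cᵢ for each i. Then the product set B = C₁ × ⋯ × C_{r-1} ⊆ X^{r-1} is super-regular at (x̄₁,…,x̄_{r-1}). -/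
open Filter Metric
open scoped RealInnerProductSpace Pointwise

noncomputable section

variable {X : Type*} [NormedAddCommGroup X] [InnerProductSpace ℝ X]

/-- Component norm is bounded by the `PiLp 2` norm. -/
lemma norm_apply_le_piLp {m : ℕ} (x : PiLp 2 (fun _ : Fin m => X)) (i : Fin m) :
    ‖x i‖ ≤ ‖x‖ := by
  have h2 : ‖x i‖ ^ 2 ≤ ‖x‖ ^ 2 := by
    rw [PiLp.norm_sq_eq_of_L2]
    exact Finset.single_le_sum (f := fun j => ‖x j‖ ^ 2)
      (fun j _ => by positivity) (Finset.mem_univ i)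
  exact le_of_pow_le_pow_left₀ two_ne_zero (norm_nonneg _) h2

/-- Projection onto a product set is componentwise. -/
lemma proj_apply_mem {m : ℕ} {C : Fin m → Set X} (hC : ∀ i, (C i).Nonempty)
    {x p : PiLp 2 (fun _ : Fin m => X)}
    (hp : p ∈ proj {y : PiLp 2 (fun _ : Fin m => X) | ∀ i, y i ∈ C i} x) (i : Fin m) :
    p i ∈ proj (C i) (x i) := by
  obtain ⟨hpB, hpd⟩ := hp
  refine ⟨hpB i, ?_⟩
  have hle : Metric.infDist (x i) (C i) ≤ ‖x i - p i‖ := by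
    simpa [dist_eq_norm] using Metric.infDist_le_dist_of_mem (hpB i)
  rcases eq_or_lt_of_le hle with h | h
  · exact h.symm
  · exfalso
    obtain ⟨q, hqC, hq⟩ := (Metric.infDist_lt_iff (hC i)).1 h
    rw [dist_eq_norm] at hq
    set p' : PiLp 2 (fun _ : Fin m => X) :=
      (WithLp.equiv 2 _).symm (Function.update ((WithLp.equiv 2 _) p) i q) with hp'
    have hp'app : ∀ j, p' j = if j = i then q else p j := by
      intro j
      by_cases hj : j = i
      · subst hj; simp [hp', Function.update]
      · simp [hp', Function.update, hj]
    have hp'B : p' ∈ {y : PiLp 2 (fun _ : Fin m => X) | ∀ i, y i ∈ C i} := by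
      intro j
      rw [hp'app j]
      by_cases hj : j = i
      · simp [hj, hqC]
      · simp [hj, hpB j]
    have hlt : ‖x - p'‖ ^ 2 < ‖x - p‖ ^ 2 := by
      rw [PiLp.norm_sq_eq_of_L2, PiLp.norm_sq_eq_of_L2]
      refine Finset.sum_lt_sum ?_ ⟨i, Finset.mem_univ i, ?_⟩
      · intro j _
        show ‖(x - p') j‖ ^ 2 ≤ ‖(x - p) j‖ ^ 2
        by_cases hj : j = i
        · subst hj
          have : (x - p') j = x j - q := by
            show x j - p' j = _
            rw [hp'app j]; simp
          rw [this]
          have : (x - p) j = x j - p j := rfl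
          rw [this]
          exact pow_le_pow_left₀ (norm_nonneg _) hq.le 2
        · have : (x - p') j = x j - p j := by
            show x j - p' j = _
            rw [hp'app j]; simp [hj]
          rw [this]; rfl
      · show ‖(x - p') i‖ ^ 2 < ‖(x - p) i‖ ^ 2
        have h1 : (x - p') i = x i - q := by
          show x i - p' i = _
          rw [hp'app i]; simp
        have h2 : (x - p) i = x i - p i := rfl
        rw [h1, h2]
        have hn : 0 ≤ ‖x i - q‖ := norm_nonneg _
        nlinarith [norm_nonneg (x i - p i)]
    have hlt' : ‖x - p'‖ < ‖x - p‖ := lt_of_pow_lt_pow_left₀ 2 (norm_nonneg _) hlt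
    have : Metric.infDist x {y : PiLp 2 (fun _ : Fin m => X) | ∀ i, y i ∈ C i} ≤ ‖x - p'‖ := by
      simpa [dist_eq_norm] using Metric.infDist_le_dist_of_mem hp'B
    rw [hpd] at hlt'
    exact absurd (this.trans_lt hlt') (lt_irrefl _)

/-- Evaluation at a component is continuous on `PiLp`. -/
lemma tendsto_apply {m : ℕ} {xs : ℕ → PiLp 2 (fun _ : Fin m => X)}
    {x : PiLp 2 (fun _ : Fin m => X)} (h : Tendsto xs atTop (nhds x)) (i : Fin m) :
    Tendsto (fun k => xs k i) atTop (nhds (x i)) := by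
  have hc : Continuous fun y : PiLp 2 (fun _ : Fin m => X) => y i :=
    (continuous_apply i).comp (PiLp.continuousLinearEquiv 2 ℝ _).continuous
  exact (hc.tendsto x).comp h

/-- Limiting normals to a product set have components that are limiting normals. -/
lemma limNormalCone_apply_mem {m : ℕ} {C : Fin m → Set X} (hC : ∀ i, (C i).Nonempty)
    {z u : PiLp 2 (fun _ : Fin m => X)}
    (hu : u ∈ limNormalCone {y : PiLp 2 (fun _ : Fin m => X) | ∀ i, y i ∈ C i} z)
    (i : Fin m) : u i ∈ limNormalCone (C i) (z i) := by
  obtain ⟨hzB, τ, xs, zs, hτ, hzs, hxs, hlim⟩ := hu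
  refine ⟨hzB i, τ, fun k => xs k i, fun k => zs k i, hτ,
    fun k => proj_apply_mem hC (hzs k) i, tendsto_apply hxs i, ?_⟩
  have : (fun k => τ k • (zs k i - xs k i)) = fun k => (τ k • (zs k - xs k)) i := rfl
  rw [this]
  exact tendsto_apply hlim i

theorem stmt6 {m : ℕ} (C : Fin m → Set X) (xb : Fin m → X)
    (hxb : ∀ i, xb i ∈ C i) (hsr : ∀ i, SuperRegular (C i) (xb i)) :
    SuperRegular {y : PiLp 2 (fun _ : Fin m => X) | ∀ i, y i ∈ C i}
      ((WithLp.equiv 2 _).symm xb) := by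
  intro ε hε
  have hC : ∀ i, (C i).Nonempty := fun i => ⟨xb i, hxb i⟩
  choose δf hδf hδ using fun i => hsr i ε hε
  obtain ⟨δ, hδpos, hδle⟩ : ∃ δ > 0, ∀ i, δ ≤ δf i := by
    rcases isEmpty_or_nonempty (Fin m) with he | hne
    · exact ⟨1, one_pos, fun i => he.elim i⟩
    · have hU : (Finset.univ : Finset (Fin m)).Nonempty := Finset.univ_nonempty
      exact ⟨Finset.univ.inf' hU δf, (Finset.lt_inf'_iff hU).2 fun i _ => hδf i,
        fun i => Finset.inf'_le _ (Finset.mem_univ i)⟩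
  refine ⟨δ, hδpos, ?_⟩
  rintro y ⟨hyB, hyb⟩ z ⟨hzB, hzb⟩ u hu
  -- component membership in balls
  have hball : ∀ (w : PiLp 2 (fun _ : Fin m => X)),
      w ∈ Metric.closedBall ((WithLp.equiv 2 _).symm xb) δ →
      ∀ i, w i ∈ Metric.closedBall (xb i) (δf i) := by
    intro w hw i
    rw [Metric.mem_closedBall, dist_eq_norm] at hw ⊢
    have h1 : ‖w i - xb i‖ ≤ ‖w - (WithLp.equiv 2 _).symm xb‖ := by
      have := norm_apply_le_piLp (w - (WithLp.equiv 2 _).symm xb) i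
      simpa using this
    exact h1.trans (hw.trans (hδle i))
  have key : ∀ i, ⟪u i, y i - z i⟫ ≤ ε * ‖u i‖ * ‖y i - z i‖ := fun i =>
    hδ i (y i) ⟨hyB i, hball y hyb i⟩ (z i) ⟨hzB i, hball z hzb i⟩ (u i)
      (limNormalCone_apply_mem hC hu i)
  -- Cauchy-Schwarz step
  set a : PiLp 2 (fun _ : Fin m => ℝ) := (WithLp.equiv 2 _).symm (fun i => ‖u i‖) with ha
  set b : PiLp 2 (fun _ : Fin m => ℝ) := (WithLp.equiv 2 _).symm (fun i => ‖y i - z i‖) with hb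
  have hna : ‖a‖ = ‖u‖ := by
    rw [PiLp.norm_eq_of_L2, PiLp.norm_eq_of_L2]
    congr 1
    refine Finset.sum_congr rfl fun i _ => ?_
    simp [ha]
  have hnb : ‖b‖ = ‖y - z‖ := by
    rw [PiLp.norm_eq_of_L2, PiLp.norm_eq_of_L2]
    congr 1
    refine Finset.sum_congr rfl fun i _ => ?_
    have : (y - z) i = y i - z i := rfl
    simp [hb, this]
  have hcs : ∑ i, ‖u i‖ * ‖y i - z i‖ ≤ ‖u‖ * ‖y - z‖ := by
    have := real_inner_le_norm a b
    rw [PiLp.inner_apply] at this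
    simp only [ha, hb] at this
    rw [hna, hnb] at this
    simpa [RCLike.inner_apply, conj_trivial, mul_comm] using this
  calc ⟪u, y - z⟫ = ∑ i, ⟪u i, (y - z) i⟫ := PiLp.inner_apply _ _
    _ = ∑ i, ⟪u i, y i - z i⟫ := rfl
    _ ≤ ∑ i, ε * ‖u i‖ * ‖y i - z i‖ := Finset.sum_le_sum fun i _ => key i
    _ = ε * ∑ i, ‖u i‖ * ‖y i - z i‖ := by rw [Finset.mul_sum]; exact Finset.sum_congr rfl fun i _ => by ring
    _ ≤ ε * (‖u‖ * ‖y - z‖) := by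
        exact mul_le_mul_of_nonneg_left hcs hε.le
    _ = ε * ‖u‖ * ‖y - z‖ := by ring
end
end

section
/- Let C₁,…,C_r ⊆ X be nonempty closed sets with linearly regular collection around x̄ ∈ X (with constants κ ≥ 0, δ > 0). Let B = C₁ × ⋯ × C_{r-1} and K = {(x,…,x) : x ∈ C_r} in X^{r-1}. Then {B, K} is linearly regular around the diagonal point (x̄,…,x̄); in particular d_{B∩K}(z) ≤ (1 + 2κ√(r−1)) max{d_B(z), d_K(z)} for all z in the ball of radius √(r−1)·δ/2 around (x̄,…,x̄). -/
open Filter Metric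
open scoped RealInnerProductSpace Pointwise

noncomputable section

variable {X : Type*} [NormedAddCommGroup X] [InnerProductSpace ℝ X]

lemma dist_diag_aux {m : ℕ} (u : PiLp 2 (fun _ : Fin m => X)) (x : X) :
    dist u (diagMap m x) = Real.sqrt (∑ i, ‖u i - x‖ ^ 2) := by
  rw [PiLp.dist_eq_of_L2]
  congr 1
  apply Finset.sum_congr rfl
  intro i _
  rw [dist_eq_norm]
  rfl

lemma coord_le_aux {m : ℕ} (u v : PiLp 2 (fun _ : Fin m => X)) (i : Fin m) :
    dist (u i) (v i) ≤ dist u v := by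
  rw [PiLp.dist_eq_of_L2]
  have h1 : dist (u i) (v i) = Real.sqrt (dist (u i) (v i) ^ 2) := by
    rw [Real.sqrt_sq dist_nonneg]
  rw [h1]
  apply Real.sqrt_le_sqrt
  exact Finset.single_le_sum (f := fun j => dist (u j) (v j) ^ 2)
    (fun j _ => sq_nonneg _) (Finset.mem_univ i)

lemma diag_dist_aux {m : ℕ} (x y : X) :
    dist (diagMap m x) (diagMap m y) = Real.sqrt m * ‖x - y‖ := by
  rw [dist_diag_aux]
  have h : ∀ i : Fin m, ‖diagMap m x i - y‖ ^ 2 = ‖x - y‖ ^ 2 := fun i => rfl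
  simp_rw [h]
  rw [Finset.sum_const, Finset.card_univ, Fintype.card_fin, nsmul_eq_mul,
    Real.sqrt_mul (Nat.cast_nonneg m), Real.sqrt_sq (norm_nonneg _)]

lemma pyth_aux {m : ℕ} (z : PiLp 2 (fun _ : Fin m => X)) (w a : X)
    (hw : ∑ i : Fin m, (z i - w) = 0) :
    ∑ i : Fin m, ‖z i - a‖ ^ 2 = (∑ i : Fin m, ‖z i - w‖ ^ 2) + m * ‖w - a‖ ^ 2 := by
  have key : ∀ i : Fin m, ‖z i - a‖ ^ 2
      = ‖z i - w‖ ^ 2 + 2 * ⟪z i - w, w - a⟫ + ‖w - a‖ ^ 2 := by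
    intro i
    have h : z i - a = (z i - w) + (w - a) := by abel
    rw [h, norm_add_sq_real]
  simp_rw [key]
  rw [Finset.sum_add_distrib, Finset.sum_add_distrib]
  have h0 : ∑ i : Fin m, 2 * (⟪z i - w, w - a⟫ : ℝ) = 0 := by
    rw [← Finset.mul_sum, ← sum_inner, hw, inner_zero_left, mul_zero]
  rw [h0, add_zero, Finset.sum_const, Finset.card_univ, Fintype.card_fin, nsmul_eq_mul]

theorem stmt8 (r : ℕ) (hr : 2 ≤ r)
    (C : Fin (r - 1) → Set X) (Cr : Set X)
    (hne : ∀ i, (C i).Nonempty) (hcl : ∀ i, IsClosed (C i))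
    (hner : Cr.Nonempty) (hclr : IsClosed Cr)
    (xb : X) (κ δ : ℝ) (hκ : 0 ≤ κ) (hδ : 0 < δ)
    (hlr : ∀ z ∈ Metric.closedBall xb δ,
      Metric.infDist z ((⋂ i, C i) ∩ Cr)
        ≤ κ * max (⨆ i, Metric.infDist z (C i)) (Metric.infDist z Cr)) :
    ∀ z ∈ Metric.closedBall (diagMap (r - 1) xb) (Real.sqrt ((r : ℝ) - 1) * δ / 2),
      Metric.infDist z
          ({y : PiLp 2 (fun _ : Fin (r - 1) => X) | ∀ i, y i ∈ C i}
            ∩ {y : PiLp 2 (fun _ : Fin (r - 1) => X) | ∃ a ∈ Cr, ∀ i, y i = a})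
        ≤ (1 + 2 * κ * Real.sqrt ((r : ℝ) - 1))
            * max (Metric.infDist z {y : PiLp 2 (fun _ : Fin (r - 1) => X) | ∀ i, y i ∈ C i})
                  (Metric.infDist z
                    {y : PiLp 2 (fun _ : Fin (r - 1) => X) | ∃ a ∈ Cr, ∀ i, y i = a}) := by
  intro z hz
  have hm1 : 1 ≤ r - 1 := by omega
  have hm0 : (0 : ℝ) < ((r - 1 : ℕ) : ℝ) := by exact_mod_cast hm1
  haveI : Nonempty (Fin (r - 1)) := Fin.pos_iff_nonempty.mp (by omega)
  have hmr : (r : ℝ) - 1 = ((r - 1 : ℕ) : ℝ) := by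
    rw [Nat.cast_sub (by omega : 1 ≤ r)]; norm_num
  rw [hmr] at hz ⊢
  set B : Set (PiLp 2 (fun _ : Fin (r - 1) => X)) := {y | ∀ i, y i ∈ C i} with hBdef
  set K : Set (PiLp 2 (fun _ : Fin (r - 1) => X)) := {y | ∃ a ∈ Cr, ∀ i, y i = a} with hKdef
  set s : ℝ := Real.sqrt ((r - 1 : ℕ) : ℝ) with hsdef
  have hsm1 : (1 : ℝ) ≤ s := by
    rw [hsdef, show (1:ℝ) = Real.sqrt 1 by simp]
    exact Real.sqrt_le_sqrt (by exact_mod_cast hm1)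
  have hsm0 : (0 : ℝ) ≤ s := Real.sqrt_nonneg _
  by_cases hBK : (B ∩ K).Nonempty
  swap
  · rw [Set.not_nonempty_iff_eq_empty] at hBK
    rw [hBK, Metric.infDist_empty]
    have h1 : (0:ℝ) ≤ 1 + 2 * κ * s := by positivity
    exact mul_nonneg h1 (le_max_of_le_left Metric.infDist_nonneg)
  have hKne : K.Nonempty := by
    obtain ⟨b0, hb0⟩ := hner
    exact ⟨diagMap (r - 1) b0, b0, hb0, fun i => rfl⟩
  have hBne : B.Nonempty := by
    refine ⟨(WithLp.equiv 2 _).symm (fun i => (hne i).some), fun i => ?_⟩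
    exact (hne i).some_mem
  set ρ := max (Metric.infDist z B) (Metric.infDist z K) with hρdef
  have hρ0 : 0 ≤ ρ := le_max_of_le_left Metric.infDist_nonneg
  have hdB : Metric.infDist z B ≤ ρ := le_max_left _ _
  have hdK : Metric.infDist z K ≤ ρ := le_max_right _ _
  have key : ∀ ε > (0:ℝ), Metric.infDist z (B ∩ K)
      ≤ (1 + 2 * κ * s) * ρ + (1 + s * (κ + 1)) * ε := by
    intro ε hε
    obtain ⟨y, hyK, hy⟩ := (Metric.infDist_lt_iff hKne).mp
      (lt_add_of_pos_right (Metric.infDist z K) hε)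
    obtain ⟨a, haCr, hya⟩ := hyK
    have hyd : y = diagMap (r - 1) a := PiLp.ext fun i => hya i
    rw [hyd] at hy
    set w : X := ((r - 1 : ℕ) : ℝ)⁻¹ • ∑ i : Fin (r - 1), z i with hwdef
    have hsum : ∑ i : Fin (r - 1), (z i - w) = 0 := by
      rw [Finset.sum_sub_distrib, Finset.sum_const, Finset.card_univ, Fintype.card_fin,
        ← Nat.cast_smul_eq_nsmul ℝ, hwdef, smul_smul, mul_inv_cancel₀ (ne_of_gt hm0),
        one_smul, sub_self]
    have hzw : dist z (diagMap (r - 1) w) ≤ dist z (diagMap (r - 1) a) := by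
      rw [dist_diag_aux, dist_diag_aux]
      apply Real.sqrt_le_sqrt
      rw [pyth_aux z w a hsum]
      exact le_add_of_nonneg_right (by positivity)
    have hwa : s * ‖w - a‖ ≤ dist z (diagMap (r - 1) a) := by
      rw [dist_diag_aux, pyth_aux z w a hsum]
      have h : s * ‖w - a‖ = Real.sqrt (((r - 1 : ℕ) : ℝ) * ‖w - a‖ ^ 2) := by
        rw [Real.sqrt_mul (Nat.cast_nonneg _), Real.sqrt_sq (norm_nonneg _), hsdef]
      rw [h]
      apply Real.sqrt_le_sqrt
      exact le_add_of_nonneg_left (Finset.sum_nonneg fun i _ => sq_nonneg _)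
    have hziw : ∀ i : Fin (r - 1), ‖z i - w‖ ≤ dist z (diagMap (r - 1) w) := by
      intro i
      have h := coord_le_aux z (diagMap (r - 1) w) i
      rwa [dist_eq_norm] at h
    have hziB : ∀ i : Fin (r - 1), Metric.infDist (z i) (C i) ≤ Metric.infDist z B := by
      intro i
      by_contra hcon
      push_neg at hcon
      obtain ⟨y', hy', hlt⟩ := (Metric.infDist_lt_iff hBne).mp hcon
      exact absurd (le_trans (Metric.infDist_le_dist_of_mem (hy' i)) (coord_le_aux z y' i))
        (not_le.mpr hlt)
    have hw_ball : w ∈ Metric.closedBall xb δ := by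
      rw [Metric.mem_closedBall, dist_eq_norm]
      have h1 : w - xb = ((r - 1 : ℕ) : ℝ)⁻¹ • ∑ i : Fin (r - 1), (z i - xb) := by
        rw [Finset.sum_sub_distrib, Finset.sum_const, Finset.card_univ, Fintype.card_fin,
          ← Nat.cast_smul_eq_nsmul ℝ, smul_sub, smul_smul,
          inv_mul_cancel₀ (ne_of_gt hm0), one_smul]
      have h2 : ‖w - xb‖ ≤ ((r - 1 : ℕ) : ℝ)⁻¹ * ∑ i : Fin (r - 1), ‖z i - xb‖ := by
        rw [h1, norm_smul]
        gcongr
        · simp [abs_of_nonneg (le_of_lt (inv_pos.mpr hm0))]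
        · exact norm_sum_le _ _
      have h3 : ∑ i : Fin (r - 1), ‖z i - xb‖
          ≤ Real.sqrt (((r - 1 : ℕ) : ℝ) * ∑ i : Fin (r - 1), ‖z i - xb‖ ^ 2) := by
        rw [Real.le_sqrt (Finset.sum_nonneg fun i _ => norm_nonneg _) (by positivity)]
        have h := sq_sum_le_card_mul_sum_sq (s := (Finset.univ : Finset (Fin (r - 1))))
          (f := fun i => ‖z i - xb‖)
        simpa using h
      have h4 : dist z (diagMap (r - 1) xb) ≤ s * δ / 2 := by
        rw [Metric.mem_closedBall] at hz; exact hz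
      rw [dist_diag_aux] at h4
      have h5 : Real.sqrt (((r - 1 : ℕ) : ℝ) * ∑ i : Fin (r - 1), ‖z i - xb‖ ^ 2)
          = s * Real.sqrt (∑ i : Fin (r - 1), ‖z i - xb‖ ^ 2) := by
        rw [hsdef]; exact Real.sqrt_mul (Nat.cast_nonneg _) _
      have hmm : s * s = ((r - 1 : ℕ) : ℝ) := Real.mul_self_sqrt (Nat.cast_nonneg _)
      have h6 : ‖w - xb‖ ≤ ((r - 1 : ℕ) : ℝ)⁻¹ * (s * (s * δ / 2)) := by
        calc ‖w - xb‖ ≤ ((r - 1 : ℕ) : ℝ)⁻¹ * ∑ i : Fin (r - 1), ‖z i - xb‖ := h2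
        _ ≤ ((r - 1 : ℕ) : ℝ)⁻¹ * (s * Real.sqrt (∑ i : Fin (r - 1), ‖z i - xb‖ ^ 2)) := by
            rw [← h5]
            exact mul_le_mul_of_nonneg_left h3 (le_of_lt (inv_pos.mpr hm0))
        _ ≤ ((r - 1 : ℕ) : ℝ)⁻¹ * (s * (s * δ / 2)) :=
            mul_le_mul_of_nonneg_left (mul_le_mul_of_nonneg_left h4 hsm0)
              (le_of_lt (inv_pos.mpr hm0))
      have h7 : ((r - 1 : ℕ) : ℝ)⁻¹ * (s * (s * δ / 2)) = δ / 2 := by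
        rw [show s * (s * δ / 2) = (s * s) * (δ / 2) by ring, hmm, ← mul_assoc,
          inv_mul_cancel₀ (ne_of_gt hm0), one_mul]
      rw [h7] at h6
      linarith
    have hza_lt : dist z (diagMap (r - 1) a) < Metric.infDist z K + ε := hy
    have hzw_ρ : dist z (diagMap (r - 1) w) ≤ ρ + ε := by linarith
    have hCi_w : ∀ i : Fin (r - 1), Metric.infDist w (C i) ≤ 2 * ρ + ε := by
      intro i
      have h1 : Metric.infDist w (C i) ≤ Metric.infDist (z i) (C i) + dist w (z i) :=
        Metric.infDist_le_infDist_add_dist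
      have h2 : dist w (z i) = ‖z i - w‖ := by rw [dist_comm, dist_eq_norm]
      have h3 := hziw i
      have h4 := hziB i
      linarith
    have hCr_w : Metric.infDist w Cr ≤ 2 * ρ + ε := by
      have h1 : Metric.infDist w Cr ≤ dist w a := Metric.infDist_le_dist_of_mem haCr
      have h2 : dist w a = ‖w - a‖ := dist_eq_norm _ _
      have h3 : ‖w - a‖ ≤ s * ‖w - a‖ := le_mul_of_one_le_left (norm_nonneg _) hsm1
      linarith
    have hinter : Metric.infDist w ((⋂ i, C i) ∩ Cr) ≤ κ * (2 * ρ + ε) := by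
      refine le_trans (hlr w hw_ball) ?_
      apply mul_le_mul_of_nonneg_left _ hκ
      exact max_le (ciSup_le hCi_w) hCr_w
    obtain ⟨p, hpB, a0, ha0Cr, hpa⟩ := hBK
    have hIne : ((⋂ i, C i) ∩ Cr).Nonempty :=
      ⟨a0, Set.mem_iInter.2 fun i => hpa i ▸ hpB i, ha0Cr⟩
    obtain ⟨a2, ha2, ha2d⟩ := (Metric.infDist_lt_iff hIne).mp
      (lt_add_of_pos_right (Metric.infDist w ((⋂ i, C i) ∩ Cr)) hε)
    have hmem : diagMap (r - 1) a2 ∈ B ∩ K :=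
      ⟨fun i => Set.mem_iInter.mp ha2.1 i, a2, ha2.2, fun i => rfl⟩
    have hfin : Metric.infDist z (B ∩ K) ≤ dist z (diagMap (r - 1) a2) :=
      Metric.infDist_le_dist_of_mem hmem
    have htri : dist z (diagMap (r - 1) a2)
        ≤ dist z (diagMap (r - 1) w) + s * ‖w - a2‖ := by
      calc dist z (diagMap (r - 1) a2)
          ≤ dist z (diagMap (r - 1) w) + dist (diagMap (r - 1) w) (diagMap (r - 1) a2) :=
        dist_triangle _ _ _
      _ = dist z (diagMap (r - 1) w) + s * ‖w - a2‖ := by rw [diag_dist_aux, hsdef]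
    have hwa2 : ‖w - a2‖ ≤ κ * (2 * ρ + ε) + ε := by
      rw [← dist_eq_norm]
      linarith
    have hswa2 : s * ‖w - a2‖ ≤ s * (κ * (2 * ρ + ε) + ε) :=
      mul_le_mul_of_nonneg_left hwa2 hsm0
    have hring : (1 + 2 * κ * s) * ρ + (1 + s * (κ + 1)) * ε
        = (ρ + ε) + s * (κ * (2 * ρ + ε) + ε) := by ring
    rw [hring]
    calc Metric.infDist z (B ∩ K) ≤ dist z (diagMap (r - 1) a2) := hfin
    _ ≤ dist z (diagMap (r - 1) w) + s * ‖w - a2‖ := htri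
    _ ≤ (ρ + ε) + s * (κ * (2 * ρ + ε) + ε) := add_le_add hzw_ρ hswa2
  apply le_of_forall_pos_le_add
  intro η hη
  have hc : (0:ℝ) < 1 + s * (κ + 1) := by positivity
  have hk := key (η / (1 + s * (κ + 1))) (div_pos hη hc)
  rwa [mul_div_cancel₀ _ (ne_of_gt hc)] at hk
end
end

section
/- Let C₁,…,C_r ⊆ X be nonempty closed sets whose collection is strongly regular at x̄ ∈ X. Let B = C₁ × ⋯ × C_{r-1} and K = {(x,…,x) : x ∈ C_r} in X^{r-1}, and assume P_{C_r}(q) is nonempty for all q (closedness suffices). Then {B, K} is strongly regular at the diagonal point (x̄,…,x̄): if v ∈ N_B((x̄,…,x̄)) and w ∈ N_K((x̄,…,x̄)) satisfy v + w = 0, then v = w = 0. -/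
open Filter Metric
open scoped RealInnerProductSpace Pointwise

noncomputable section

variable {X : Type*} [NormedAddCommGroup X] [InnerProductSpace ℝ X]

lemma eval_cont {n : ℕ} (i : Fin n) :
    Continuous (fun y : PiLp 2 (fun _ : Fin n => X) => y i) :=
  (continuous_apply i).comp (PiLp.continuous_ofLp (p := 2) (β := fun _ : Fin n => X))

lemma sum_cont {n : ℕ} : Continuous (fun y : PiLp 2 (fun _ : Fin n => X) => ∑ i, y i) :=
  continuous_finset_sum _ fun i _ => eval_cont i

lemma distsq_pi {n : ℕ} (x z : PiLp 2 (fun _ : Fin n => X)) :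
    dist x z ^ 2 = ∑ i, dist (x i) (z i) ^ 2 := by
  rw [PiLp.dist_eq_of_L2, Real.sq_sqrt]
  exact Finset.sum_nonneg fun i _ => sq_nonneg _

lemma proj_pi_comp {n : ℕ} (C : Fin n → Set X) (x z : PiLp 2 (fun _ : Fin n => X))
    (hz : z ∈ proj {y : PiLp 2 (fun _ : Fin n => X) | ∀ i, y i ∈ C i} x) (i : Fin n) :
    z i ∈ proj (C i) (x i) := by
  obtain ⟨hzB, hzd⟩ := hz
  refine ⟨hzB i, ?_⟩
  have hle : infDist (x i) (C i) ≤ dist (x i) (z i) := infDist_le_dist_of_mem (hzB i)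
  rw [← dist_eq_norm]
  by_contra h
  have hlt : infDist (x i) (C i) < dist (x i) (z i) := hle.lt_of_ne fun e => h e.symm
  obtain ⟨y, hyC, hy⟩ := (infDist_lt_iff ⟨z i, hzB i⟩).1 hlt
  set z' : PiLp 2 (fun _ : Fin n => X) := WithLp.toLp 2 (Function.update z i y) with hz'
  have hz'B : ∀ j, z' j ∈ C j := by
    intro j
    rcases eq_or_ne j i with rfl | hj
    · simpa [hz'] using hyC
    · simpa [hz', Function.update_of_ne hj] using hzB j
  have hsq : dist x z' ^ 2 < dist x z ^ 2 := by
    rw [distsq_pi, distsq_pi]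
    refine Finset.sum_lt_sum (fun j _ => ?_) ⟨i, Finset.mem_univ i, ?_⟩
    · rcases eq_or_ne j i with rfl | hj
      · simpa [hz'] using pow_le_pow_left₀ dist_nonneg hy.le 2
      · simp [hz', Function.update_of_ne hj]
    · simpa [hz'] using pow_lt_pow_left₀ hy dist_nonneg two_ne_zero
  have hlt2 : dist x z' < dist x z := lt_of_pow_lt_pow_left₀ 2 dist_nonneg hsq
  have h1 : infDist x {y : PiLp 2 (fun _ : Fin n => X) | ∀ i, y i ∈ C i} ≤ dist x z' :=
    infDist_le_dist_of_mem hz'B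
  rw [← dist_eq_norm] at hzd
  exact lt_irrefl _ (h1.trans_lt (hlt2.trans_eq hzd))

lemma key_identity {n : ℕ} (hn : 0 < n) (x : PiLp 2 (fun _ : Fin n => X)) (c : X) :
    ∑ i, dist (x i) c ^ 2 =
      (∑ i, ‖x i - (n : ℝ)⁻¹ • ∑ j, x j‖ ^ 2) + n * ‖(n : ℝ)⁻¹ • (∑ j, x j) - c‖ ^ 2 := by
  set m : X := (n : ℝ)⁻¹ • ∑ j, x j with hm
  have hnR : (n : ℝ) ≠ 0 := Nat.cast_ne_zero.2 hn.ne'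
  have hsm : (n : ℝ) • m = ∑ j, x j := smul_inv_smul₀ hnR _
  have hzero : ∑ i, (x i - m) = 0 := by
    rw [Finset.sum_sub_distrib, Finset.sum_const, Finset.card_univ, Fintype.card_fin,
      ← Nat.cast_smul_eq_nsmul ℝ, hsm, sub_self]
  have hterm : ∀ i : Fin n, dist (x i) c ^ 2 =
      ‖x i - m‖ ^ 2 + 2 * ⟪x i - m, m - c⟫ + ‖m - c‖ ^ 2 := by
    intro i
    rw [dist_eq_norm]
    have : x i - c = (x i - m) + (m - c) := by abel
    rw [this, norm_add_sq_real]
  simp_rw [hterm]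
  rw [Finset.sum_add_distrib, Finset.sum_add_distrib, ← Finset.mul_sum,
    ← sum_inner, hzero, inner_zero_left, mul_zero, add_zero,
    Finset.sum_const, Finset.card_univ, Fintype.card_fin, nsmul_eq_mul]

lemma proj_diag_comp {n : ℕ} (hn : 0 < n) (Cr : Set X) (x z : PiLp 2 (fun _ : Fin n => X))
    (hz : z ∈ proj {y : PiLp 2 (fun _ : Fin n => X) | ∃ a ∈ Cr, ∀ i, y i = a} x) :
    ∃ a ∈ Cr, (∀ i, z i = a) ∧ a ∈ proj Cr ((n : ℝ)⁻¹ • ∑ j, x j) := by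
  obtain ⟨⟨a, haC, hza⟩, hzd⟩ := hz
  set m : X := (n : ℝ)⁻¹ • ∑ j, x j with hm
  refine ⟨a, haC, hza, haC, ?_⟩
  have hle : infDist m Cr ≤ dist m a := infDist_le_dist_of_mem haC
  rw [← dist_eq_norm]
  by_contra h
  have hlt : infDist m Cr < dist m a := hle.lt_of_ne fun e => h e.symm
  obtain ⟨b, hbC, hb⟩ := (infDist_lt_iff ⟨a, haC⟩).1 hlt
  set z' : PiLp 2 (fun _ : Fin n => X) := WithLp.toLp 2 (fun _ => b) with hz'
  have hz'K : z' ∈ {y : PiLp 2 (fun _ : Fin n => X) | ∃ a ∈ Cr, ∀ i, y i = a} :=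
    ⟨b, hbC, fun _ => rfl⟩
  have hsq : dist x z' ^ 2 < dist x z ^ 2 := by
    rw [distsq_pi, distsq_pi]
    have h1 : ∀ i : Fin n, dist (x i) (z' i) ^ 2 = dist (x i) b ^ 2 := fun i => rfl
    have h2 : ∀ i : Fin n, dist (x i) (z i) ^ 2 = dist (x i) a ^ 2 := fun i => by rw [hza i]
    simp_rw [h1, h2, key_identity hn x b, key_identity hn x a]
    have hsqlt : dist m b ^ 2 < dist m a ^ 2 := pow_lt_pow_left₀ hb dist_nonneg two_ne_zero
    rw [dist_eq_norm, dist_eq_norm] at hsqlt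
    have hn' : (0 : ℝ) < n := Nat.cast_pos.2 hn
    exact add_lt_add_of_le_of_lt le_rfl (by exact (mul_lt_mul_iff_right₀ hn').2 hsqlt)
  have hlt2 : dist x z' < dist x z := lt_of_pow_lt_pow_left₀ 2 dist_nonneg hsq
  have h1 : infDist x {y : PiLp 2 (fun _ : Fin n => X) | ∃ a ∈ Cr, ∀ i, y i = a} ≤ dist x z' :=
    infDist_le_dist_of_mem hz'K
  rw [← dist_eq_norm] at hzd
  exact lt_irrefl _ (h1.trans_lt (hlt2.trans_eq hzd))

theorem stmt9 (r : ℕ) (hr : 2 ≤ r)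
    (C : Fin (r - 1) → Set X) (Cr : Set X)
    (hne : ∀ i, (C i).Nonempty) (hcl : ∀ i, IsClosed (C i))
    (hner : Cr.Nonempty) (hclr : IsClosed Cr)
    (xb : X)
    (hsr : ∀ (u : Fin (r - 1) → X) (ur : X),
      (∀ i, u i ∈ limNormalCone (C i) xb) → ur ∈ limNormalCone Cr xb →
      (∑ i, u i) + ur = 0 → (∀ i, u i = 0) ∧ ur = 0) :
    ∀ v ∈ limNormalCone {y : PiLp 2 (fun _ : Fin (r - 1) => X) | ∀ i, y i ∈ C i}
        (diagMap (r - 1) xb),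
    ∀ w ∈ limNormalCone {y : PiLp 2 (fun _ : Fin (r - 1) => X) | ∃ a ∈ Cr, ∀ i, y i = a}
        (diagMap (r - 1) xb),
      v + w = 0 → v = 0 ∧ w = 0 := by
  intro v hv w hw hvw
  have hn : 0 < r - 1 := by omega
  have hnR : ((r - 1 : ℕ) : ℝ) ≠ 0 := Nat.cast_ne_zero.2 hn.ne'
  obtain ⟨hxB, τ, xs, zs, hτ, hproj, hxs, hlim⟩ := hv
  obtain ⟨hxK, σ, ys, ws, hσ, hprojK, hys, hlimK⟩ := hw
  have hvi : ∀ i, v i ∈ limNormalCone (C i) xb := by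
    intro i
    refine ⟨hxB i, τ, fun k => xs k i, fun k => zs k i, hτ,
      fun k => proj_pi_comp C (xs k) (zs k) (hproj k) i, ?_, ?_⟩
    · exact ((eval_cont i).tendsto _).comp hxs
    · exact ((eval_cont i).tendsto _).comp hlim
  choose a ha using fun k => proj_diag_comp hn Cr (ys k) (ws k) (hprojK k)
  set m : ℕ → X := fun k => ((r - 1 : ℕ) : ℝ)⁻¹ • ∑ j, ys k j with hmdef
  have hmt : Tendsto m atTop (nhds xb) := by
    have hc : Continuous (fun y : PiLp 2 (fun _ : Fin (r - 1) => X) =>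
        ((r - 1 : ℕ) : ℝ)⁻¹ • ∑ j, y j) := (continuous_const_smul _).comp sum_cont
    have h2 := (hc.tendsto _).comp hys
    have hval : ((r - 1 : ℕ) : ℝ)⁻¹ • ∑ j : Fin (r - 1), (diagMap (r - 1) xb) j = xb := by
      have : ∑ j : Fin (r - 1), (diagMap (r - 1) xb) j = ((r - 1 : ℕ) : ℝ) • xb := by
        simp [diagMap, Finset.sum_const, ← Nat.cast_smul_eq_nsmul ℝ]
      rw [this, inv_smul_smul₀ hnR]
    rwa [hval] at h2
  have hxbCr : xb ∈ Cr := by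
    obtain ⟨b, hbCr, hdb⟩ := hxK
    have : xb = b := hdb ⟨0, hn⟩
    rw [this]; exact hbCr
  have hwr : (∑ i, w i) ∈ limNormalCone Cr xb := by
    refine ⟨hxbCr, fun k => ((r - 1 : ℕ) : ℝ) * σ k, m, a,
      fun k => mul_nonneg (Nat.cast_nonneg _) (hσ k), fun k => (ha k).2.2, hmt, ?_⟩
    have h2 := (sum_cont.tendsto _).comp hlimK
    refine h2.congr fun k => ?_
    have hsw : ∑ i : Fin (r - 1), ws k i = ((r - 1 : ℕ) : ℝ) • a k := by
      have : ∀ i : Fin (r - 1), ws k i = a k := (ha k).2.1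
      simp [this, Finset.sum_const, ← Nat.cast_smul_eq_nsmul ℝ]
    have hsy : ∑ i : Fin (r - 1), ys k i = ((r - 1 : ℕ) : ℝ) • m k :=
      (smul_inv_smul₀ hnR _).symm
    calc ∑ i : Fin (r - 1), (σ k • (ws k - ys k)) i
        = ∑ i : Fin (r - 1), σ k • (ws k i - ys k i) := rfl
      _ = σ k • ((∑ i : Fin (r - 1), ws k i) - ∑ i : Fin (r - 1), ys k i) := by
          rw [← Finset.smul_sum, Finset.sum_sub_distrib]
      _ = (((r - 1 : ℕ) : ℝ) * σ k) • (a k - m k) := by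
          rw [hsw, hsy, ← smul_sub, smul_smul, mul_comm]
  have hcomp : ∀ i, v i + w i = 0 := fun i => by simpa using congrArg (fun u : PiLp 2 (fun _ : Fin (r - 1) => X) => u i) hvw
  have hsum0 : (∑ i, v i) + (∑ i, w i) = 0 := by
    rw [← Finset.sum_add_distrib]
    exact Finset.sum_eq_zero fun i _ => hcomp i
  obtain ⟨hv0, hw0⟩ := hsr (fun i => v i) (∑ i, w i) hvi hwr hsum0
  constructor
  · exact PiLp.ext fun i => by simp [hv0 i]
  · refine PiLp.ext fun i => ?_
    have h3 := hcomp i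
    rw [hv0 i, zero_add] at h3
    exact h3
end
end
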